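/- arXiv:2311.00849 — 5 statements merged into one kernel-verified Lean document; each statement's English description precedes it below -/
import Mathlib

section
/- Let n ≥ 1 and let λ₁, …, λₙ : [0,1] → ℂ∖{0} be continuous functions with λⱼ(0) = λⱼ(1) for each j = 1, …, n, and let θ₁, …, θₙ : [0,1] → ℝ be continuous functions satisfying λⱼ(t) = |λⱼ(t)| e^{iθⱼ(t)} for all t and j. If 0 does not belong to the convex hull (over ℝ) of the set {λ₁(t), …, λₙ(t)} for any t ∈ [0,1], then there exists an integer m such that Σⱼ (θⱼ(1) − θⱼ(0)) = 2πnm; i.e., n divides the sum of the winding numbers of the loops λ₁, …, λₙ. -/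
/-- If `0` never belongs to the convex hull of the values of `n` nonvanishing loops
`λ₁, …, λₙ`, then `n` divides the sum of their winding numbers around the origin. -/
theorem sum_winding_numbers_divisible_of_zero_not_in_convex_hull
    (n : ℕ) (hn : 1 ≤ n) (lam : Fin n → ℝ → ℂ)
    (hcont : ∀ j, ContinuousOn (lam j) (Set.Icc 0 1))
    (hne : ∀ j, ∀ t ∈ Set.Icc (0:ℝ) 1, lam j t ≠ 0)
    (hloop : ∀ j, lam j 0 = lam j 1)
    (θ : Fin n → ℝ → ℝ) (hθ : ∀ j, ContinuousOn (θ j) (Set.Icc 0 1))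
    (hlift : ∀ j, ∀ t ∈ Set.Icc (0:ℝ) 1,
      lam j t = (‖lam j t‖ : ℂ) * Complex.exp (Complex.I * (θ j t : ℂ)))
    (hconv : ∀ t ∈ Set.Icc (0:ℝ) 1,
      (0 : ℂ) ∉ convexHull ℝ (Set.range fun j => lam j t)) :
    ∃ m : ℤ, ∑ j, (θ j 1 - θ j 0) = 2 * Real.pi * (n : ℝ) * (m : ℝ) := by
  have h0mem : (0:ℝ) ∈ Set.Icc (0:ℝ) 1 := by norm_num
  have h1mem : (1:ℝ) ∈ Set.Icc (0:ℝ) 1 := by norm_num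
  have habs : ∀ j, ∀ t ∈ Set.Icc (0:ℝ) 1, (0:ℝ) < ‖lam j t‖ := by
    intro j t ht
    exact norm_pos_iff.mpr (hne j t ht)
  -- winding integers
  have key0 : ∀ j, ∃ a : ℤ, θ j 1 = θ j 0 + 2 * Real.pi * a := by
    intro j
    have h0 := hlift j 0 h0mem
    have h1 := hlift j 1 h1mem
    have hab : ‖lam j 0‖ = ‖lam j 1‖ := by rw [hloop j]
    have heq : (‖lam j 1‖ : ℂ) * Complex.exp (Complex.I * (θ j 0 : ℂ))
        = (‖lam j 1‖ : ℂ) * Complex.exp (Complex.I * (θ j 1 : ℂ)) := by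
      rw [← h1, ← hab, ← h0]
      exact hloop j
    have hne1 : ((‖lam j 1‖ : ℂ)) ≠ 0 := by
      exact_mod_cast (habs j 1 h1mem).ne'
    have he := mul_left_cancel₀ hne1 heq
    rw [Complex.exp_eq_exp_iff_exists_int] at he
    obtain ⟨m, hm⟩ := he
    refine ⟨-m, ?_⟩
    have := congrArg Complex.im hm
    simp [Complex.mul_im, Complex.add_im, Complex.mul_re] at this
    push_cast
    linarith
  choose a ha using key0
  -- no two winding numbers differ
  have key : ∀ j k : Fin n, a j < a k → False := by
    intro j k hjk
    set g : ℝ → ℝ := fun t => θ k t - θ j t with hg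
    have hgc : ContinuousOn g (Set.Icc 0 1) := (hθ k).sub (hθ j)
    have hpi := Real.pi_pos
    set m : ℤ := ⌈(g 0 - Real.pi) / (2 * Real.pi)⌉ with hmdef
    set v : ℝ := Real.pi + 2 * Real.pi * m with hv
    have hd : (1:ℤ) ≤ a k - a j := by omega
    have hg1 : g 1 = g 0 + 2 * Real.pi * ((a k : ℝ) - (a j : ℝ)) := by
      simp only [hg, ha j, ha k]; ring
    have hvmem : v ∈ Set.Icc (g 0) (g 1) := by
      constructor
      · have := Int.le_ceil ((g 0 - Real.pi) / (2 * Real.pi))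
        rw [div_le_iff₀ (by positivity)] at this
        simp only [hv, hmdef]
        nlinarith
      · have hc := Int.ceil_lt_add_one ((g 0 - Real.pi) / (2 * Real.pi))
        have hc2 : ((m:ℝ) - 1) * (2 * Real.pi) < g 0 - Real.pi := by
          rw [← lt_div_iff₀ (by positivity : (0:ℝ) < 2 * Real.pi)]
          simp only [hmdef]; linarith
        have hd' : (1:ℝ) ≤ (a k : ℝ) - (a j : ℝ) := by exact_mod_cast hd
        rw [hg1]
        simp only [hv]
        nlinarith
    have := intermediate_value_Icc (by norm_num : (0:ℝ) ≤ 1) hgc hvmem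
    obtain ⟨t, ht, hgt⟩ := this
    -- at time t, lam k t is antipodal in direction to lam j t
    have hθt : Complex.I * (θ k t : ℂ)
        = Complex.I * (θ j t : ℂ) + (Real.pi * Complex.I + (m:ℂ) * (2 * Real.pi * Complex.I)) := by
      have : θ k t = θ j t + Real.pi + 2 * Real.pi * m := by
        have : g t = v := hgt
        simp only [hg, hv] at this
        linarith
      rw [this]
      push_cast
      ring
    have hexp : Complex.exp (Complex.I * (θ k t : ℂ)) = - Complex.exp (Complex.I * (θ j t : ℂ)) := by
      rw [hθt, Complex.exp_add, Complex.exp_add, Complex.exp_pi_mul_I,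
        Complex.exp_int_mul_two_pi_mul_I]
      ring_nf
    set u : ℂ := Complex.exp (Complex.I * (θ j t : ℂ)) with hu
    set rj : ℝ := ‖lam j t‖ with hrj
    set rk : ℝ := ‖lam k t‖ with hrk
    have hrjp : 0 < rj := habs j t ht
    have hrkp : 0 < rk := habs k t ht
    have hlj : lam j t = (rj : ℂ) * u := hlift j t ht
    have hlk : lam k t = (rk : ℂ) * (-u) := by
      rw [hlift k t ht, hexp]
    apply hconv t ht
    have hseg : (0:ℂ) ∈ segment ℝ (lam j t) (lam k t) := by
      refine ⟨rk / (rj + rk), rj / (rj + rk), by positivity, by positivity, ?_, ?_⟩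
      · field_simp
        try ring
      · rw [hlj, hlk]
        simp only [Complex.real_smul]
        push_cast
        have hne2 : (rj : ℂ) + rk ≠ 0 := by
          have : (0:ℝ) < rj + rk := by linarith
          exact_mod_cast this.ne'
        field_simp
        ring
    exact segment_subset_convexHull (Set.mem_range_self j) (Set.mem_range_self k) hseg
  -- all winding numbers are equal
  have haeq : ∀ j, a j = a ⟨0, hn⟩ := fun j =>
    le_antisymm (not_lt.mp fun h => key _ _ h) (not_lt.mp fun h => key _ _ h)
  refine ⟨a ⟨0, hn⟩, ?_⟩
  have hterm : ∀ j : Fin n, θ j 1 - θ j 0 = 2 * Real.pi * ((a ⟨0, hn⟩ : ℤ) : ℝ) := by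
    intro j
    rw [ha j, ← haeq j]
    ring
  rw [Finset.sum_congr rfl fun j _ => hterm j, Finset.sum_const, Finset.card_univ,
    Fintype.card_fin]
  push_cast
  ring
end

section
/- Let n ≥ 1 and let λ₁, …, λₙ : [0,1] → ℂ∖{0} be continuous functions with λⱼ(0) = λⱼ(1) for each j, and let θ₁, …, θₙ : [0,1] → ℝ be continuous functions satisfying λⱼ(t) = |λⱼ(t)| e^{iθⱼ(t)} for all t and j. If there is no integer m with Σⱼ (θⱼ(1) − θⱼ(0)) = 2πnm (i.e., n does not divide the sum of the winding numbers), then there exist indices j, k ∈ {1, …, n} and φ ∈ [0,1] such that 0 lies on the closed segment joining λⱼ(φ) and λₖ(φ) in ℂ. -/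
open Real Set

/-- IVT helper: a continuous function dropping by at least `2π` hits `π + 2πℓ`. -/
lemma aux_cross (f : ℝ → ℝ) (hf : ContinuousOn f (Set.Icc 0 1))
    (h : f 1 + 2 * Real.pi ≤ f 0) :
    ∃ t ∈ Set.Icc (0:ℝ) 1, ∃ ℓ : ℤ, f t = Real.pi + 2 * Real.pi * ℓ := by
  set ℓ : ℤ := ⌈(f 1 - Real.pi) / (2 * Real.pi)⌉ with hℓ
  have h2π : (0:ℝ) < 2 * Real.pi := by positivity
  have h1 : f 1 ≤ Real.pi + 2 * Real.pi * ℓ := by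
    have := Int.le_ceil ((f 1 - Real.pi) / (2 * Real.pi))
    rw [div_le_iff₀ h2π] at this
    linarith [this]
  have h2 : Real.pi + 2 * Real.pi * ℓ ≤ f 0 := by
    have hc2 := Int.ceil_lt_add_one ((f 1 - Real.pi) / (2 * Real.pi))
    have hm := mul_lt_mul_of_pos_right hc2 h2π
    rw [add_mul, div_mul_cancel₀ _ (ne_of_gt h2π), one_mul] at hm
    have : (ℓ:ℝ) * (2 * Real.pi) = 2 * Real.pi * (ℓ:ℝ) := by ring
    linarith
  have := intermediate_value_Icc' (by norm_num : (0:ℝ) ≤ 1) hf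
    (Set.mem_Icc.mpr ⟨h1, h2⟩)
  obtain ⟨t, ht, hft⟩ := this
  exact ⟨t, ht, ℓ, hft⟩

/-- If `n` does not divide the sum of the winding numbers of `n` nonvanishing loops
`λ₁, …, λₙ`, then at some parameter `φ` the origin lies on the segment joining
`λⱼ(φ)` and `λₖ(φ)` for some indices `j, k`. -/
theorem zero_on_segment_of_sum_winding_numbers_not_divisible
    (n : ℕ) (hn : 1 ≤ n) (lam : Fin n → ℝ → ℂ)
    (hcont : ∀ j, ContinuousOn (lam j) (Set.Icc 0 1))
    (hne : ∀ j, ∀ t ∈ Set.Icc (0:ℝ) 1, lam j t ≠ 0)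
    (hloop : ∀ j, lam j 0 = lam j 1)
    (θ : Fin n → ℝ → ℝ) (hθ : ∀ j, ContinuousOn (θ j) (Set.Icc 0 1))
    (hlift : ∀ j, ∀ t ∈ Set.Icc (0:ℝ) 1,
      lam j t = (‖lam j t‖ : ℂ) * Complex.exp (Complex.I * (θ j t : ℂ)))
    (hwind : ¬ ∃ m : ℤ, ∑ j, (θ j 1 - θ j 0) = 2 * Real.pi * (n : ℝ) * (m : ℝ)) :
    ∃ j k : Fin n, ∃ φ ∈ Set.Icc (0:ℝ) 1,
      (0 : ℂ) ∈ segment ℝ (lam j φ) (lam k φ) := by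
  have h01 : (0:ℝ) ∈ Set.Icc (0:ℝ) 1 := by norm_num
  have h11 : (1:ℝ) ∈ Set.Icc (0:ℝ) 1 := by norm_num
  -- each winding number is an integer
  have key : ∀ j : Fin n, ∃ m : ℤ, θ j 1 - θ j 0 = 2 * Real.pi * m := by
    intro j
    have e0 := hlift j 0 h01
    have e1 := hlift j 1 h11
    have habs : ‖lam j 0‖ = ‖lam j 1‖ := by rw [hloop j]
    have hA : (‖lam j 0‖ : ℂ) ≠ 0 := by
      simpa using (norm_ne_zero_iff.mpr (hne j 0 h01))
    have hexp : Complex.exp (Complex.I * (θ j 0 : ℂ)) = Complex.exp (Complex.I * (θ j 1 : ℂ)) := by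
      have : (‖lam j 0‖ : ℂ) * Complex.exp (Complex.I * (θ j 0 : ℂ))
           = (‖lam j 0‖ : ℂ) * Complex.exp (Complex.I * (θ j 1 : ℂ)) := by
        rw [← e0, habs, ← e1, hloop j]
      exact mul_left_cancel₀ hA this
    rw [Complex.exp_eq_exp_iff_exists_int] at hexp
    obtain ⟨m, hm⟩ := hexp
    refine ⟨-m, ?_⟩
    have : (Complex.I) * (θ j 0 : ℂ) = Complex.I * ((θ j 1 : ℂ) + m * (2 * Real.pi)) := by
      rw [hm]; ring
    have h2 := mul_left_cancel₀ Complex.I_ne_zero this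
    have h3 : ((θ j 0 : ℝ) : ℂ) = ((θ j 1 + m * (2 * Real.pi) : ℝ) : ℂ) := by
      push_cast; exact h2
    have h4 : θ j 0 = θ j 1 + m * (2 * Real.pi) := Complex.ofReal_injective h3
    push_cast
    linarith
  choose w hw using key
  -- two distinct winding numbers
  have hjk : ∃ j k : Fin n, w k < w j := by
    by_contra hc
    push_neg at hc
    have hall : ∀ j k : Fin n, w j = w k := fun j k => le_antisymm (hc j k) (hc k j)
    apply hwind
    have j0 : Fin n := ⟨0, hn⟩
    refine ⟨w j0, ?_⟩
    have : ∑ j, (θ j 1 - θ j 0) = ∑ j : Fin n, 2 * Real.pi * (w j0 : ℝ) := by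
      apply Finset.sum_congr rfl
      intro j _
      rw [hw j, hall j j0]
    rw [this, Finset.sum_const]
    simp [Finset.card_univ]
    ring
  obtain ⟨j, k, hwjk⟩ := hjk
  -- (θ j 1 - θ k 1) + 2π ≤ (θ j 0 - θ k 0), i.e. winding of j < winding of k.
  -- we have w k < w j, so use f = θ k - θ j.
  set f : ℝ → ℝ := fun t => θ k t - θ j t with hf
  have hfc : ContinuousOn f (Set.Icc 0 1) := (hθ k).sub (hθ j)
  have hdrop : f 1 + 2 * Real.pi ≤ f 0 := by
    have hk := hw k
    have hj := hw j
    have : (w k : ℝ) + 1 ≤ (w j : ℝ) := by exact_mod_cast Int.add_one_le_iff.mpr hwjk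
    have hπ := Real.pi_pos
    simp only [hf]
    nlinarith
  obtain ⟨t, ht, ℓ, htℓ⟩ := aux_cross f hfc hdrop
  -- at t, θ k t = θ j t + π + 2πℓ, so lam k t = -(c) * lam j t direction-wise
  refine ⟨j, k, t, ht, ?_⟩
  set a : ℝ := ‖lam j t‖ with ha
  set b : ℝ := ‖lam k t‖ with hb
  have hapos : 0 < a := by simpa [ha] using (norm_pos_iff.mpr (hne j t ht))
  have hbpos : 0 < b := by simpa [hb] using (norm_pos_iff.mpr (hne k t ht))
  set E : ℂ := Complex.exp (Complex.I * (θ j t : ℂ)) with hE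
  have hlamj : lam j t = (a : ℂ) * E := hlift j t ht
  have hlamk : lam k t = -((b : ℂ) * E) := by
    have hθk : θ k t = θ j t + (Real.pi + 2 * Real.pi * ℓ) := by
      have : θ k t - θ j t = Real.pi + 2 * Real.pi * ℓ := htℓ
      linarith
    have : Complex.exp (Complex.I * (θ k t : ℂ)) = -E := by
      rw [hθk]
      push_cast
      rw [show Complex.I * ((θ j t : ℂ) + (Real.pi + 2 * Real.pi * ℓ))
          = Complex.I * (θ j t : ℂ) + Real.pi * Complex.I + ℓ * (2 * Real.pi * Complex.I) by ring]
      rw [Complex.exp_add, Complex.exp_add, Complex.exp_pi_mul_I,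
        Complex.exp_int_mul_two_pi_mul_I]
      simp [hE]
    rw [hlift k t ht, ← hb, this]
    ring
  -- now 0 = (b/(a+b)) • lam j t + (a/(a+b)) • lam k t
  have habpos : 0 < a + b := by linarith
  refine ⟨b / (a + b), a / (a + b), by positivity, by positivity, ?_, ?_⟩
  · field_simp
    ring
  · rw [hlamj, hlamk]
    simp only [Complex.real_smul]
    push_cast
    have : ((a : ℂ) + b) ≠ 0 := by
      exact_mod_cast (ne_of_gt (by exact_mod_cast habpos : (0:ℂ).re < ((a+b:ℝ):ℂ).re) : _) 
    field_simp
    ring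
end

section
/- Let f, g : [0,1] → ℂ∖{0} be continuous functions with f(0) = f(1) and g(0) = g(1), and let θ_f, θ_g : [0,1] → ℝ be continuous functions satisfying f(t) = |f(t)| e^{iθ_f(t)} and g(t) = |g(t)| e^{iθ_g(t)} for all t ∈ [0,1]. If θ_f(1) − θ_f(0) ≠ θ_g(1) − θ_g(0) (i.e., the winding numbers of f and g around the origin differ), then there exists φ ∈ [0,1] such that 0 lies on the closed segment joining f(φ) and g(φ) in ℂ. -/
open Complex Real

lemma exp_I_eq_int (a b : ℝ) (h : Complex.exp (Complex.I * a) = Complex.exp (Complex.I * b)) :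
    ∃ m : ℤ, b - a = 2 * π * m := by
  rw [Complex.exp_eq_exp_iff_exists_int] at h
  obtain ⟨n, hn⟩ := h
  refine ⟨-n, ?_⟩
  have : (a : ℂ) = (b : ℂ) + n * (2 * π) := by
    have h2 : Complex.I * a = Complex.I * ((b : ℂ) + n * (2 * π)) := by
      rw [hn]; ring
    exact mul_left_cancel₀ Complex.I_ne_zero h2
  have : a = b + n * (2 * π) := by exact_mod_cast this
  push_cast
  linarith

lemma loop_lift_int (f : ℝ → ℂ) (θ : ℝ → ℝ)
    (hne : f 0 ≠ 0) (hloop : f 0 = f 1)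
    (h0 : f 0 = ((‖f 0‖ : ℝ) : ℂ) * Complex.exp (Complex.I * (θ 0 : ℂ)))
    (h1 : f 1 = ((‖f 1‖ : ℝ) : ℂ) * Complex.exp (Complex.I * (θ 1 : ℂ))) :
    ∃ m : ℤ, θ 1 - θ 0 = 2 * π * m := by
  apply exp_I_eq_int
  have hne1 : f 1 ≠ 0 := hloop ▸ hne
  have hne' : ((‖f 1‖ : ℝ) : ℂ) ≠ 0 := by
    exact_mod_cast norm_ne_zero_iff.mpr hne1
  apply mul_left_cancel₀ hne'
  rw [hloop] at h0
  rw [← h0, ← h1]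

/-- If two nonvanishing loops `f` and `g` in `ℂ ∖ {0}` have different winding numbers
around the origin, then at some parameter `φ` the origin lies on the segment joining
`f(φ)` and `g(φ)`. -/
theorem zero_on_segment_of_winding_numbers_ne
    (f g : ℝ → ℂ)
    (hf : ContinuousOn f (Set.Icc 0 1)) (hg : ContinuousOn g (Set.Icc 0 1))
    (hfne : ∀ t ∈ Set.Icc (0:ℝ) 1, f t ≠ 0)
    (hgne : ∀ t ∈ Set.Icc (0:ℝ) 1, g t ≠ 0)
    (hfloop : f 0 = f 1) (hgloop : g 0 = g 1)
    (θf θg : ℝ → ℝ)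
    (hθf : ContinuousOn θf (Set.Icc 0 1)) (hθg : ContinuousOn θg (Set.Icc 0 1))
    (hliftf : ∀ t ∈ Set.Icc (0:ℝ) 1,
      f t = ((‖f t‖ : ℝ) : ℂ) * Complex.exp (Complex.I * (θf t : ℂ)))
    (hliftg : ∀ t ∈ Set.Icc (0:ℝ) 1,
      g t = ((‖g t‖ : ℝ) : ℂ) * Complex.exp (Complex.I * (θg t : ℂ)))
    (hwind : θf 1 - θf 0 ≠ θg 1 - θg 0) :
    ∃ φ ∈ Set.Icc (0:ℝ) 1, (0 : ℂ) ∈ segment ℝ (f φ) (g φ) := by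
  by_contra hcon
  push_neg at hcon
  set ψ : ℝ → ℝ := fun t => θf t - θg t with hψdef
  have h01 : (0:ℝ) ∈ Set.Icc (0:ℝ) 1 := by constructor <;> norm_num
  have h11 : (1:ℝ) ∈ Set.Icc (0:ℝ) 1 := by constructor <;> norm_num
  -- Step 1: ψ never hits π + 2πℤ on [0,1]
  have step1 : ∀ t ∈ Set.Icc (0:ℝ) 1, ∀ m : ℤ, ψ t ≠ π + 2 * π * m := by
    intro t ht m heq
    apply hcon t ht
    have hcast : (θf t : ℂ) = (θg t : ℂ) + π + 2 * π * m := by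
      have : θf t = θg t + π + 2 * π * m := by
        have := heq; simp only [hψdef] at this; linarith
      exact_mod_cast congrArg Complex.ofReal this
    have hexp : Complex.exp (Complex.I * (θf t : ℂ))
        = -Complex.exp (Complex.I * (θg t : ℂ)) := by
      have : Complex.I * (θf t : ℂ)
          = Complex.I * (θg t : ℂ) + π * Complex.I + m * (2 * π * Complex.I) := by
        rw [hcast]; ring
      rw [this, Complex.exp_add, Complex.exp_add, Complex.exp_pi_mul_I,
        Complex.exp_int_mul_two_pi_mul_I]
      ring
    have key : f t * ((‖g t‖ : ℝ) : ℂ) = -((‖f t‖ : ℝ) : ℂ) * g t := by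
      conv_lhs => rw [hliftf t ht]
      conv_rhs => rw [hliftg t ht]
      rw [hexp]; ring
    have hga : ‖g t‖ ≠ 0 := norm_ne_zero_iff.mpr (hgne t ht)
    have hfa : ‖f t‖ ≠ 0 := norm_ne_zero_iff.mpr (hfne t ht)
    have hgapos : 0 < ‖g t‖ := norm_pos_iff.mpr (hgne t ht)
    have hfapos : 0 < ‖f t‖ := norm_pos_iff.mpr (hfne t ht)
    set L : ℝ := ‖f t‖ / ‖g t‖ with hL
    have hLpos : 0 < L := div_pos hfapos hgapos
    refine ⟨1 / (1 + L), L / (1 + L), by positivity, by positivity, ?_, ?_⟩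
    · field_simp
    · have hfg : f t = ((-L : ℝ) : ℂ) * g t := by
        have hga' : ((‖g t‖ : ℝ) : ℂ) ≠ 0 := by exact_mod_cast hga
        rw [hL]; push_cast
        field_simp
        linear_combination key
      rw [hfg]
      simp only [Complex.real_smul]
      have hcoeff : ((1 / (1 + L) : ℝ) : ℂ) * ((-L : ℝ) : ℂ) + ((L / (1 + L) : ℝ) : ℂ) = 0 := by
        have : (1 / (1 + L)) * (-L) + L / (1 + L) = 0 := by field_simp; ring
        exact_mod_cast congrArg Complex.ofReal this
      linear_combination g t * hcoeff
  -- Step 2: the image of ψ is ord-connected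
  have hψc : ContinuousOn ψ (Set.Icc 0 1) := hθf.sub hθg
  have hS : IsPreconnected (ψ '' Set.Icc 0 1) :=
    (isPreconnected_Icc).image ψ hψc
  have hOrd : Set.OrdConnected (ψ '' Set.Icc 0 1) := hS.ordConnected
  set k : ℤ := ⌊(ψ 0 - π) / (2 * π)⌋ with hk
  have h2pi : (0:ℝ) < 2 * π := by positivity
  have hfl : π + 2 * π * k ≤ ψ 0 := by
    have := Int.floor_le ((ψ 0 - π) / (2 * π))
    rw [← hk] at this
    have := (le_div_iff₀ h2pi).mp this
    linarith
  have hlow : π + 2 * π * k < ψ 0 :=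
    lt_of_le_of_ne hfl (fun h => step1 0 h01 k h.symm)
  have hhigh : ψ 0 < π + 2 * π * (k + 1) := by
    have := Int.lt_floor_add_one ((ψ 0 - π) / (2 * π))
    rw [← hk] at this
    have := (div_lt_iff₀ h2pi).mp this
    push_cast
    linarith
  have hmem0 : ψ 0 ∈ ψ '' Set.Icc 0 1 := ⟨0, h01, rfl⟩
  have hmem1 : ψ 1 ∈ ψ '' Set.Icc 0 1 := ⟨1, h11, rfl⟩
  -- Step 3: all of the image lies in the open interval
  have bound : ∀ x ∈ ψ '' Set.Icc 0 1, π + 2 * π * k < x ∧ x < π + 2 * π * (k + 1) := by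
    intro x hx
    constructor
    · by_contra hle
      push_neg at hle
      have : π + 2 * π * k ∈ ψ '' Set.Icc 0 1 :=
        hOrd.out hx hmem0 ⟨hle, le_of_lt hlow⟩
      obtain ⟨t, ht, hts⟩ := this
      exact step1 t ht k hts
    · by_contra hle
      push_neg at hle
      have : π + 2 * π * (k + 1) ∈ ψ '' Set.Icc 0 1 :=
        hOrd.out hmem0 hx ⟨le_of_lt hhigh, hle⟩
      obtain ⟨t, ht, hts⟩ := this
      have : ψ t = π + 2 * π * (k + 1) := hts
      exact step1 t ht (k + 1) (by push_cast; push_cast at this; linarith)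
  obtain ⟨hl1, hh1⟩ := bound (ψ 1) hmem1
  -- Step 4: ψ 1 - ψ 0 is a multiple of 2π, hence zero, contradicting hwind
  obtain ⟨m, hm⟩ := loop_lift_int f θf (hfne 0 h01) hfloop (hliftf 0 h01) (hliftf 1 h11)
  obtain ⟨n, hn⟩ := loop_lift_int g θg (hgne 0 h01) hgloop (hliftg 0 h01) (hliftg 1 h11)
  have hd : ψ 1 - ψ 0 = 2 * π * ((m - n : ℤ) : ℝ) := by
    simp only [hψdef]; push_cast; linarith
  have hdne : (m - n : ℤ) ≠ 0 := by
    intro h0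
    apply hwind
    have : ((m - n : ℤ) : ℝ) = 0 := by exact_mod_cast h0
    rw [this, mul_zero] at hd
    simp only [hψdef] at hd
    linarith
  have habs1 : (1:ℝ) ≤ |((m - n : ℤ) : ℝ)| := by
    exact_mod_cast Int.one_le_abs hdne
  have hsmall : |ψ 1 - ψ 0| < 2 * π := by
    rw [abs_lt]
    constructor <;> push_cast at hh1 hhigh <;> linarith
  rw [hd, abs_mul, abs_of_pos h2pi] at hsmall
  nlinarith
end

section
/- For every n×n complex matrix M, the numerical range W(M) = {x* M x : x ∈ ℂⁿ, x*x = 1} is a convex subset of ℂ. -/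
open Matrix

namespace TH

variable {n : ℕ}

/-- Sesquilinear expansion of the quadratic form. -/
lemma expand (A : Matrix (Fin n) (Fin n) ℂ) (u v : Fin n → ℂ) (a b : ℂ) :
    star (a • u + b • v) ⬝ᵥ A.mulVec (a • u + b • v) =
      star a * a * (star u ⬝ᵥ A.mulVec u) + star a * b * (star u ⬝ᵥ A.mulVec v)
        + star b * a * (star v ⬝ᵥ A.mulVec u) + star b * b * (star v ⬝ᵥ A.mulVec v) := by
  simp only [star_add, star_smul, mulVec_add, mulVec_smul, dotProduct_add, add_dotProduct,
    dotProduct_smul, smul_dotProduct, smul_eq_mul]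
  ring

lemma expand_dot (u v : Fin n → ℂ) (a b : ℂ) :
    star (a • u + b • v) ⬝ᵥ (a • u + b • v) =
      star a * a * (star u ⬝ᵥ u) + star a * b * (star u ⬝ᵥ v)
        + star b * a * (star v ⬝ᵥ u) + star b * b * (star v ⬝ᵥ v) := by
  simp only [star_add, star_smul, dotProduct_add, add_dotProduct,
    dotProduct_smul, smul_dotProduct, smul_eq_mul]
  ring

lemma conj_form {A : Matrix (Fin n) (Fin n) ℂ} (hA : Aᴴ = A) (u v : Fin n → ℂ) :
    starRingEnd ℂ (star u ⬝ᵥ A.mulVec v) = star v ⬝ᵥ A.mulVec u := by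
  have h1 : star (star u ⬝ᵥ A.mulVec v) = star (A.mulVec v) ⬝ᵥ u := by
    rw [star_dotProduct, star_star]
  rw [starRingEnd_apply, h1, star_mulVec, hA, ← dotProduct_mulVec]

lemma conj_dot (u v : Fin n → ℂ) :
    starRingEnd ℂ (star u ⬝ᵥ v) = star v ⬝ᵥ u := by
  rw [starRingEnd_apply, star_dotProduct, star_star]

/-- Core lemma: if the quadratic form of `N` takes values `0` and `1` at unit vectors,
it takes every real value `t ∈ [0,1]` at some unit vector. -/
lemma core (N : Matrix (Fin n) (Fin n) ℂ) (x y : Fin n → ℂ)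
    (hx : star x ⬝ᵥ x = 1) (hy : star y ⬝ᵥ y = 1)
    (hx0 : star x ⬝ᵥ N.mulVec x = 0) (hy1 : star y ⬝ᵥ N.mulVec y = 1)
    (t : ℝ) (ht0 : 0 ≤ t) (ht1 : t ≤ 1) :
    ∃ v : Fin n → ℂ, star v ⬝ᵥ v = 1 ∧ star v ⬝ᵥ N.mulVec v = (t : ℂ) := by
  classical
  set H : Matrix (Fin n) (Fin n) ℂ := (2⁻¹ : ℂ) • (N + Nᴴ) with hHdef
  set K : Matrix (Fin n) (Fin n) ℂ := (-(Complex.I) * 2⁻¹) • (N - Nᴴ) with hKdef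
  have hH : Hᴴ = H := by
    ext i j
    simp [hHdef, Matrix.conjTranspose_apply, Matrix.add_apply, Matrix.smul_apply]
    ring
  have hK : Kᴴ = K := by
    ext i j
    simp [hKdef, Matrix.conjTranspose_apply, Matrix.sub_apply, Matrix.smul_apply, Complex.ext_iff]
    ring_nf
    constructor <;> trivial
  have hN : N = H + Complex.I • K := by
    ext i j
    simp [hHdef, hKdef, Matrix.add_apply, Matrix.smul_apply]
    ring_nf
    simp [Complex.I_sq]
    ring
  -- quadratic forms
  have qsplit : ∀ w : Fin n → ℂ, star w ⬝ᵥ N.mulVec w =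
      star w ⬝ᵥ H.mulVec w + Complex.I * (star w ⬝ᵥ K.mulVec w) := by
    intro w
    rw [hN]
    simp only [add_mulVec, smul_mulVec, dotProduct_add, dotProduct_smul, smul_eq_mul]
  have realH : ∀ w : Fin n → ℂ, (star w ⬝ᵥ H.mulVec w).im = 0 := by
    intro w
    have := conj_form hH w w
    rw [Complex.conj_eq_iff_im] at this
    exact this
  have realK : ∀ w : Fin n → ℂ, (star w ⬝ᵥ K.mulVec w).im = 0 := by
    intro w
    have := conj_form hK w w
    rw [Complex.conj_eq_iff_im] at this
    exact this
  have split01 : ∀ (w : Fin n → ℂ) (c : ℂ), star w ⬝ᵥ N.mulVec w = c → c.im = 0 →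
      star w ⬝ᵥ H.mulVec w = c ∧ star w ⬝ᵥ K.mulVec w = 0 := by
    intro w c hc hcim
    have h1 := qsplit w
    rw [hc] at h1
    have h2 : c.re = (star w ⬝ᵥ H.mulVec w).re ∧ c.im = (star w ⬝ᵥ H.mulVec w).im
        + (star w ⬝ᵥ K.mulVec w).re := by
      constructor
      · have := congrArg Complex.re h1
        simpa [realK w] using this
      · have := congrArg Complex.im h1
        simpa [realH w] using this
    constructor
    · apply Complex.ext
      · exact h2.1.symm
      · rw [realH w, hcim]
    · apply Complex.ext
      · have := h2.2; rw [hcim, realH w] at this; simpa using this.symm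
      · simp [realK w]
  obtain ⟨hHx, hKx⟩ := split01 x 0 hx0 rfl
  obtain ⟨hHy, hKy⟩ := split01 y 1 hy1 rfl
  -- choose phase c with |c| = 1 and Re (c * κ) = 0
  set κ : ℂ := star x ⬝ᵥ K.mulVec y with hκdef
  obtain ⟨c, hc1, hc2⟩ : ∃ c : ℂ, starRingEnd ℂ c * c = 1 ∧ (c * κ).re = 0 := by
    by_cases hκ : κ = 0
    · exact ⟨1, by simp, by simp [hκ]⟩
    · set A : ℝ := ‖κ‖ with hAdef
      have hA : (A : ℂ) ≠ 0 := by
        simpa [hAdef] using (norm_ne_zero_iff.mpr hκ)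
      have h2 : κ * starRingEnd ℂ κ = (A : ℂ) * (A : ℂ) := by
        rw [Complex.mul_conj, Complex.normSq_eq_norm_sq]
        push_cast
        ring
      refine ⟨Complex.I * starRingEnd ℂ κ * ((A : ℂ))⁻¹, ?_, ?_⟩
      · have hcc : starRingEnd ℂ (Complex.I * starRingEnd ℂ κ * ((A : ℂ))⁻¹)
            = -Complex.I * κ * ((A : ℂ))⁻¹ := by
          simp [_root_.map_mul, map_inv₀, Complex.conj_ofReal, Complex.conj_conj]
        rw [hcc]
        field_simp
        linear_combination h2 - κ * starRingEnd ℂ κ * Complex.I_sq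
      · have hmul : Complex.I * starRingEnd ℂ κ * ((A : ℂ))⁻¹ * κ = Complex.I * (A : ℂ) := by
          field_simp
          linear_combination h2
        rw [hmul]
        simp [Complex.mul_re]
  have hcc : star c * c = (1 : ℂ) := by rw [starRingEnd_apply] at hc1; exact hc1
  -- replace y by c • y
  set y' : Fin n → ℂ := c • y with hy'def
  have hy' : star y' ⬝ᵥ y' = 1 := by
    rw [hy'def, star_smul, smul_dotProduct, dotProduct_smul, smul_eq_mul, smul_eq_mul,
      ← mul_assoc, hcc, one_mul, hy]
  have hHy' : star y' ⬝ᵥ H.mulVec y' = 1 := by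
    rw [hy'def, star_smul, smul_dotProduct, mulVec_smul, dotProduct_smul, smul_eq_mul,
      smul_eq_mul, ← mul_assoc, hcc, one_mul, hHy]
  have hKy' : star y' ⬝ᵥ K.mulVec y' = 0 := by
    rw [hy'def, star_smul, smul_dotProduct, mulVec_smul, dotProduct_smul, smul_eq_mul,
      smul_eq_mul, ← mul_assoc, hcc, one_mul, hKy]
  -- cross terms
  set κ' : ℂ := star x ⬝ᵥ K.mulVec y' with hκ'def
  have hκ' : κ' = c * κ := by
    rw [hκ'def, hy'def, mulVec_smul, dotProduct_smul, smul_eq_mul, hκdef]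
  have hKcross : star x ⬝ᵥ K.mulVec y' + star y' ⬝ᵥ K.mulVec x = 0 := by
    rw [← conj_form hK x y', ← hκ'def]
    rw [Complex.add_conj]
    rw [hκ', hc2]
    norm_num
  set γ : ℂ := star x ⬝ᵥ y' with hγdef
  have hdcross : star y' ⬝ᵥ x = starRingEnd ℂ γ := by rw [hγdef, ← conj_dot]
  set h₁ : ℂ := star x ⬝ᵥ H.mulVec y' with hh₁def
  have hHcross : star y' ⬝ᵥ H.mulVec x = starRingEnd ℂ h₁ := by
    rw [hh₁def, ← conj_form hH]
  -- the path
  set u : ℝ → (Fin n → ℂ) := fun θ =>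
    ((Real.cos θ : ℂ)) • x + ((Real.sin θ : ℂ)) • y' with hudef
  have hstarcos : ∀ θ : ℝ, star ((Real.cos θ : ℂ)) = ((Real.cos θ : ℂ)) := by
    intro θ; exact Complex.conj_ofReal _
  have hstarsin : ∀ θ : ℝ, star ((Real.sin θ : ℂ)) = ((Real.sin θ : ℂ)) := by
    intro θ; exact Complex.conj_ofReal _
  -- expansions along the path
  have hνeq : ∀ θ : ℝ, star (u θ) ⬝ᵥ (u θ)
      = ((1 + Real.cos θ * Real.sin θ * (2 * γ.re) : ℝ) : ℂ) := by
    intro θ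
    rw [hudef]
    rw [expand_dot x y' ((Real.cos θ : ℂ)) ((Real.sin θ : ℂ))]
    rw [hstarcos, hstarsin, hx, hy', ← hγdef, hdcross]
    have hcs' : Real.cos θ * Real.cos θ + Real.sin θ * Real.sin θ = 1 := by
      have := Real.sin_sq_add_cos_sq θ
      nlinarith [this]
    have hcs : ((Real.cos θ : ℂ)) * ((Real.cos θ : ℂ)) + ((Real.sin θ : ℂ)) * ((Real.sin θ : ℂ)) = 1 := by
      exact_mod_cast hcs'
    have hre : γ + starRingEnd ℂ γ = ((2 * γ.re : ℝ) : ℂ) := by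
      rw [Complex.add_conj]
    rw [Complex.ofReal_add, Complex.ofReal_one, Complex.ofReal_mul, Complex.ofReal_mul]
    linear_combination ((Real.sin θ : ℂ)) * ((Real.cos θ : ℂ)) * hre + hcs
  have hHeq : ∀ θ : ℝ, star (u θ) ⬝ᵥ H.mulVec (u θ)
      = (((Real.sin θ)^2 + Real.cos θ * Real.sin θ * (2 * h₁.re) : ℝ) : ℂ) := by
    intro θ
    rw [hudef]
    rw [expand H x y' ((Real.cos θ : ℂ)) ((Real.sin θ : ℂ))]
    rw [hstarcos, hstarsin, hHx, hHy', ← hh₁def, hHcross]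
    have hre : h₁ + starRingEnd ℂ h₁ = ((2 * h₁.re : ℝ) : ℂ) := by
      rw [Complex.add_conj]
    rw [Complex.ofReal_add, Complex.ofReal_pow, Complex.ofReal_mul, Complex.ofReal_mul]
    linear_combination ((Real.sin θ : ℂ)) * ((Real.cos θ : ℂ)) * hre
  have hKeq : ∀ θ : ℝ, star (u θ) ⬝ᵥ K.mulVec (u θ) = 0 := by
    intro θ
    rw [hudef]
    rw [expand K x y' ((Real.cos θ : ℂ)) ((Real.sin θ : ℂ))]
    rw [hstarcos, hstarsin, hKx, hKy']
    linear_combination ((Real.sin θ : ℂ)) * ((Real.cos θ : ℂ)) * hKcross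
  -- the IVT function
  set f : ℝ → ℝ := fun θ => (Real.sin θ)^2 + Real.cos θ * Real.sin θ * (2 * h₁.re)
      - t * (1 + Real.cos θ * Real.sin θ * (2 * γ.re)) with hfdef
  have hf0 : f 0 = -t := by simp [hfdef]
  have hfpi : f (Real.pi / 2) = 1 - t := by simp [hfdef]
  have hfc : Continuous f := by
    apply Continuous.sub
    · exact ((Real.continuous_sin.pow 2)).add
        ((Real.continuous_cos.mul Real.continuous_sin).mul continuous_const)
    · exact continuous_const.mul
        (continuous_const.add ((Real.continuous_cos.mul Real.continuous_sin).mul continuous_const))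
  have hmem : (0 : ℝ) ∈ Set.Icc (f 0) (f (Real.pi / 2)) := by
    rw [hf0, hfpi]
    constructor <;> [linarith; linarith]
  have hpi2 : (0 : ℝ) ≤ Real.pi / 2 := by positivity
  obtain ⟨θ, hθmem, hθ⟩ := intermediate_value_Icc hpi2 hfc.continuousOn hmem
  -- at the root
  set ν : ℝ := 1 + Real.cos θ * Real.sin θ * (2 * γ.re) with hνdef
  have hHt : star (u θ) ⬝ᵥ H.mulVec (u θ) = ((t * ν : ℝ) : ℂ) := by
    rw [hHeq θ]
    norm_cast
    have hfθ : f θ = 0 := hθ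
    rw [hfdef] at hfθ
    simp only at hfθ
    rw [hνdef]
    linarith [hfθ]
  have hνval : star (u θ) ⬝ᵥ (u θ) = ((ν : ℝ) : ℂ) := hνeq θ
  -- positivity of ν
  have hνnonneg : 0 ≤ ν := by
    open ComplexOrder in
    have h := dotProduct_star_self_nonneg (u θ)
    rw [hνval] at h
    exact Complex.zero_le_real.mp h
  have hνne : ν ≠ 0 := by
    intro h0
    have huz : u θ = 0 := by
      have : star (u θ) ⬝ᵥ (u θ) = 0 := by rw [hνval, h0]; simp
      open ComplexOrder in
      exact (dotProduct_star_self_eq_zero (R := ℂ)).mp this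
    -- from u θ = 0 derive contradiction
    have heq : ((Real.cos θ : ℂ)) • x = (-(Real.sin θ : ℂ)) • y' := by
      have := huz
      rw [hudef] at this
      simp only at this
      rw [add_eq_zero_iff_eq_neg] at this
      rw [this]; ext i; simp
    have hq : ((Real.cos θ : ℂ))^2 * (star x ⬝ᵥ H.mulVec x)
        = ((Real.sin θ : ℂ))^2 * (star y' ⬝ᵥ H.mulVec y') := by
      have h1 : star (((Real.cos θ : ℂ)) • x) ⬝ᵥ H.mulVec (((Real.cos θ : ℂ)) • x)
          = star ((-(Real.sin θ : ℂ)) • y') ⬝ᵥ H.mulVec ((-(Real.sin θ : ℂ)) • y') := by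
        rw [heq]
      rw [star_smul, star_smul, smul_dotProduct, smul_dotProduct, mulVec_smul, mulVec_smul,
        dotProduct_smul, dotProduct_smul] at h1
      simp only [smul_eq_mul, hstarcos θ, star_neg, hstarsin θ] at h1
      calc ((Real.cos θ : ℂ))^2 * (star x ⬝ᵥ H.mulVec x)
          = (Real.cos θ : ℂ) * ((Real.cos θ : ℂ) * (star x ⬝ᵥ H.mulVec x)) := by ring
        _ = -(Real.sin θ : ℂ) * (-(Real.sin θ : ℂ) * (star y' ⬝ᵥ H.mulVec y')) := h1
        _ = ((Real.sin θ : ℂ))^2 * (star y' ⬝ᵥ H.mulVec y') := by ring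
    rw [hHx, hHy'] at hq
    have hsin : Real.sin θ = 0 := by
      have h2 : ((Real.sin θ : ℂ))^2 = 0 := by simpa using hq.symm
      exact_mod_cast sq_eq_zero_iff.mp h2
    have hd : ((Real.cos θ : ℂ))^2 * (star x ⬝ᵥ x) = ((Real.sin θ : ℂ))^2 * (star y' ⬝ᵥ y') := by
      have h1 : star (((Real.cos θ : ℂ)) • x) ⬝ᵥ (((Real.cos θ : ℂ)) • x)
          = star ((-(Real.sin θ : ℂ)) • y') ⬝ᵥ ((-(Real.sin θ : ℂ)) • y') := by
        rw [heq]
      rw [star_smul, star_smul, smul_dotProduct, smul_dotProduct,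
        dotProduct_smul, dotProduct_smul] at h1
      simp only [smul_eq_mul, hstarcos θ, star_neg, hstarsin θ] at h1
      calc ((Real.cos θ : ℂ))^2 * (star x ⬝ᵥ x)
          = (Real.cos θ : ℂ) * ((Real.cos θ : ℂ) * (star x ⬝ᵥ x)) := by ring
        _ = -(Real.sin θ : ℂ) * (-(Real.sin θ : ℂ) * (star y' ⬝ᵥ y')) := h1
        _ = ((Real.sin θ : ℂ))^2 * (star y' ⬝ᵥ y') := by ring
    rw [hx, hy', hsin] at hd
    have hcos : Real.cos θ = 0 := by
      have h2 : ((Real.cos θ : ℂ))^2 = 0 := by simpa using hd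
      exact_mod_cast sq_eq_zero_iff.mp h2
    have := Real.sin_sq_add_cos_sq θ
    rw [hsin, hcos] at this
    norm_num at this
  have hνpos : 0 < ν := lt_of_le_of_ne hνnonneg (Ne.symm hνne)
  -- final vector
  set s : ℝ := (Real.sqrt ν)⁻¹ with hsdef
  have hs2 : s ^ 2 * ν = 1 := by
    rw [hsdef, inv_pow, Real.sq_sqrt hνnonneg]
    exact inv_mul_cancel₀ hνne
  have hstars : star ((s : ℝ) : ℂ) = ((s : ℝ) : ℂ) := Complex.conj_ofReal _
  refine ⟨((s : ℝ) : ℂ) • u θ, ?_, ?_⟩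
  · rw [star_smul, smul_dotProduct, dotProduct_smul, smul_eq_mul, smul_eq_mul, hstars, hνval]
    have : (s * (s * ν) : ℝ) = 1 := by linear_combination hs2
    exact_mod_cast congrArg (Complex.ofReal) this
  · have hq : star (u θ) ⬝ᵥ N.mulVec (u θ) = ((t * ν : ℝ) : ℂ) := by
      rw [qsplit (u θ), hHt, hKeq θ]
      ring
    rw [star_smul, smul_dotProduct, mulVec_smul, dotProduct_smul, smul_eq_mul, smul_eq_mul,
      hstars, hq]
    have : (s * (s * (t * ν)) : ℝ) = t := by linear_combination t * hs2
    exact_mod_cast congrArg (Complex.ofReal) this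

end TH

/-- Toeplitz–Hausdorff theorem: the numerical range of a complex matrix is convex. -/
theorem numerical_range_convex
    (n : ℕ) (M : Matrix (Fin n) (Fin n) ℂ) :
    Convex ℝ {z : ℂ | ∃ x : Fin n → ℂ, star x ⬝ᵥ x = 1 ∧ star x ⬝ᵥ M.mulVec x = z} := by
  intro p hp q hq a b ha hb hab
  obtain ⟨x, hx, hxp⟩ := hp
  obtain ⟨y, hy, hyq⟩ := hq
  by_cases hpq : p = q
  · refine ⟨x, hx, ?_⟩
    rw [hxp, hpq, ← add_smul, hab, one_smul]
  · set N : Matrix (Fin n) (Fin n) ℂ := (q - p)⁻¹ • (M - p • (1 : Matrix (Fin n) (Fin n) ℂ))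
      with hNdef
    have hqp : q - p ≠ 0 := sub_ne_zero.mpr (Ne.symm hpq)
    have hform : ∀ w : Fin n → ℂ, star w ⬝ᵥ w = 1 →
        star w ⬝ᵥ N.mulVec w = (q - p)⁻¹ * (star w ⬝ᵥ M.mulVec w - p) := by
      intro w hw
      rw [hNdef, smul_mulVec, dotProduct_smul, smul_eq_mul, sub_mulVec, dotProduct_sub,
        smul_mulVec, one_mulVec, dotProduct_smul, smul_eq_mul, hw, mul_one]
    have hx0 : star x ⬝ᵥ N.mulVec x = 0 := by
      rw [hform x hx, hxp]
      simp
    have hy1 : star y ⬝ᵥ N.mulVec y = 1 := by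
      rw [hform y hy, hyq]
      field_simp
    obtain ⟨v, hv1, hv2⟩ := TH.core N x y hx hy hx0 hy1 b hb (by linarith)
    refine ⟨v, hv1, ?_⟩
    have key : star v ⬝ᵥ M.mulVec v = p + (b : ℂ) * (q - p) := by
      have h := hform v hv1
      rw [hv2] at h
      field_simp at h
      linear_combination -h
    rw [key, Complex.real_smul, Complex.real_smul]
    have hab' : (a : ℂ) + (b : ℂ) = 1 := by exact_mod_cast hab
    linear_combination (-p) * hab'
end

section
/- Let l ≥ 1 and let z₀, z₁, …, z_{l−1} ∈ ℂ be points such that 0 does not belong to the convex hull (over ℝ) of {z₀, …, z_{l−1}}. Then the total winding of the closed directed polygon with vertices z₀ → z₁ → ⋯ → z_{l−1} → z₀ around the origin vanishes: Σ_{s=0}^{l−1} ∫₀¹ (z_{s+1} − z_s)/((1−t) z_s + t z_{s+1}) dt = 0, where indices are taken modulo l (note each integrand is well-defined since every segment [z_s, z_{s+1}] lies in the convex hull and hence avoids 0). -/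
open Complex

private lemma edge_log_integral (c a b : ℂ) (ha : 0 < (c * a).re) (hb : 0 < (c * b).re) :
    (∫ t in (0:ℝ)..1, (b - a) / ((1 - (t : ℂ)) * a + (t : ℂ) * b))
      = Complex.log (c * b) - Complex.log (c * a) := by
  have hc : c ≠ 0 := by rintro rfl; simp at ha
  have hseg : ∀ t : ℝ, t ∈ Set.uIcc (0:ℝ) 1 →
      0 < (c * ((1 - (t : ℂ)) * a + (t : ℂ) * b)).re := by
    intro t ht
    rw [Set.uIcc_of_le zero_le_one] at ht
    have h1 : (c * ((1 - (t : ℂ)) * a + (t : ℂ) * b)).re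
        = (1 - t) * (c * a).re + t * (c * b).re := by
      simp only [mul_add, Complex.add_re, Complex.mul_re, Complex.mul_im,
        Complex.sub_re, Complex.sub_im, Complex.one_re, Complex.one_im,
        Complex.ofReal_re, Complex.ofReal_im]
      ring
    rw [h1]
    rcases eq_or_lt_of_le ht.1 with h0 | h0
    · have ht0 : t = 0 := h0.symm
      rw [ht0]; ring_nf; linarith
    rcases eq_or_lt_of_le ht.2 with h1' | h1'
    · rw [h1']; ring_nf; linarith
    · have p1 := mul_pos (by linarith : (0:ℝ) < 1 - t) ha
      have p2 := mul_pos h0 hb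
      linarith
  have hγne : ∀ t : ℝ, t ∈ Set.uIcc (0:ℝ) 1 →
      (1 - (t : ℂ)) * a + (t : ℂ) * b ≠ 0 := by
    intro t ht h0
    have := hseg t ht
    rw [h0] at this; simp at this
  have hderiv : ∀ t ∈ Set.uIcc (0:ℝ) 1,
      HasDerivAt (fun t : ℝ => Complex.log (c * ((1 - (t : ℂ)) * a + (t : ℂ) * b)))
        ((b - a) / ((1 - (t : ℂ)) * a + (t : ℂ) * b)) t := by
    intro t ht
    have hre := hseg t ht
    have hne := hγne t ht
    have hmem : c * ((1 - (t : ℂ)) * a + (t : ℂ) * b) ∈ Complex.slitPlane := Or.inl hre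
    have h1 : HasDerivAt (fun t : ℝ => ((t : ℂ))) 1 t := by
      simpa using (hasDerivAt_id t).ofReal_comp
    have h2 := (((hasDerivAt_const t (1:ℂ)).sub h1).mul_const a).add (h1.mul_const b)
    have h2' : HasDerivAt (fun t : ℝ => (1 - (t : ℂ)) * a + (t : ℂ) * b) (b - a) t := by
      exact h2.congr_deriv (by ring)
    have hinner : HasDerivAt (fun t : ℝ => c * ((1 - (t : ℂ)) * a + (t : ℂ) * b))
        (c * (b - a)) t := h2'.const_mul c
    have hlog := (Complex.hasDerivAt_log hmem).hasFDerivAt.restrictScalars ℝ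
    have hcomp := hlog.comp_hasDerivAt t hinner
    have heq : (ContinuousLinearMap.restrictScalars ℝ
        ((ContinuousLinearMap.toSpanSingleton ℂ
          (c * ((1 - (t : ℂ)) * a + (t : ℂ) * b))⁻¹))) (c * (b - a))
        = (b - a) / ((1 - (t : ℂ)) * a + (t : ℂ) * b) := by
      simp only [ContinuousLinearMap.coe_restrictScalars',
        ContinuousLinearMap.toSpanSingleton_apply,
        smul_eq_mul]
      field_simp
    rw [heq] at hcomp
    exact hcomp
  have hcont : ContinuousOn (fun t : ℝ => (b - a) / ((1 - (t : ℂ)) * a + (t : ℂ) * b))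
      (Set.uIcc (0:ℝ) 1) := by
    apply ContinuousOn.div continuousOn_const
    · fun_prop
    · exact hγne
  rw [intervalIntegral.integral_eq_sub_of_hasDerivAt hderiv hcont.intervalIntegrable]
  norm_num

/-- If the origin is not in the convex hull of the vertices of a closed directed polygon
`z₀ → z₁ → ⋯ → z_{l−1} → z₀`, then the total winding of the polygon around the origin
(computed as a sum of logarithmic-derivative integrals over each edge) vanishes. -/
theorem polygon_winding_zero_of_zero_not_in_convex_hull
    (l : ℕ) (hl : 1 ≤ l) (z : ℕ → ℂ) (hz : z l = z 0)
    (hconv : (0 : ℂ) ∉ convexHull ℝ (z '' {s | s < l})) :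
    ∑ s ∈ Finset.range l,
      ∫ t in (0:ℝ)..1,
        (z (s + 1) - z s) / ((1 - (t : ℂ)) * z s + (t : ℂ) * z (s + 1)) = 0 := by
  have hfin : (z '' {s | s < l}).Finite := (Set.finite_Iio l).image z
  have hcomp : IsCompact (convexHull ℝ (z '' {s | s < l})) := hfin.isCompact_convexHull ℝ
  obtain ⟨f, u, hfu, hub⟩ :=
    geometric_hahn_banach_point_closed (convex_convexHull ℝ _) hcomp.isClosed hconv
  have hu : 0 < u := by simpa using hfu
  set c : ℂ := ⟨f 1, -(f Complex.I)⟩ with hcdef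
  have hf : ∀ w : ℂ, (c * w).re = f w := by
    intro w
    have hw : w = (w.re : ℝ) • (1 : ℂ) + (w.im : ℝ) • Complex.I := by
      simp [Complex.real_smul]
    rw [Complex.mul_re]
    conv_rhs => rw [hw]
    rw [map_add, map_smul, map_smul]
    simp [hcdef]
    try ring
  have hpos : ∀ s, s ≤ l → 0 < (c * z s).re := by
    intro s hs
    have hmem : z s ∈ convexHull ℝ (z '' {t | t < l}) := by
      apply subset_convexHull
      rcases eq_or_lt_of_le hs with h | h
      · exact ⟨0, by simp only [Set.mem_setOf_eq]; omega, by rw [h, hz]⟩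
      · exact ⟨s, h, rfl⟩
    have := hub _ hmem
    rw [hf]
    linarith
  have hedge : ∀ s ∈ Finset.range l,
      (∫ t in (0:ℝ)..1,
        (z (s + 1) - z s) / ((1 - (t : ℂ)) * z s + (t : ℂ) * z (s + 1)))
      = Complex.log (c * z (s + 1)) - Complex.log (c * z s) := by
    intro s hs
    rw [Finset.mem_range] at hs
    exact edge_log_integral c (z s) (z (s + 1)) (hpos s hs.le) (hpos (s + 1) hs)
  rw [Finset.sum_congr rfl hedge, Finset.sum_range_sub (fun s => Complex.log (c * z s)) l,
    hz, sub_self]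
end
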